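/- There exist universal constants C ≥ c > 0 such that for all (a, T) ∈ ℝ × [1,∞): c·(1 + T^{1-a})/(1 + |1-a|·ln T)·ln T ≤ ∫_1^T x^{-a} dx ≤ C·(1 + T^{1-a})/(1 + |1-a|·ln T)·ln T. -/

import Mathlib

open MeasureTheory

open intervalIntegral

lemma aux_exp (u : ℝ) : (1 - u) * Real.exp u ≤ 1 := by
  have h2 : 1 - u ≤ Real.exp (-u) := by linarith [Real.add_one_le_exp (-u)]
  calc (1 - u) * Real.exp u ≤ Real.exp (-u) * Real.exp u :=
        mul_le_mul_of_nonneg_right h2 (Real.exp_pos u).le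
    _ = 1 := by rw [← Real.exp_add]; simp

lemma key_low (u : ℝ) (hu : u ≠ 0) :
    (1 + Real.exp u) / (1 + |u|) / 2 ≤ (Real.exp u - 1) / u := by
  have hE := Real.add_one_le_exp u
  have hE' := aux_exp u
  have hEp := Real.exp_pos u
  rcases hu.lt_or_gt with h | h
  · rw [abs_of_neg h, show (Real.exp u - 1) / u = (1 - Real.exp u) / (-u) by
      rw [← neg_div_neg_eq]; ring_nf]
    rw [div_div, div_le_div_iff₀ (by nlinarith) (by linarith)]
    nlinarith
  · rw [abs_of_pos h, div_div, div_le_div_iff₀ (by nlinarith) h]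
    nlinarith [sq_nonneg u]

lemma key_high (u : ℝ) (hu : u ≠ 0) :
    (Real.exp u - 1) / u ≤ 2 * ((1 + Real.exp u) / (1 + |u|)) := by
  have hE := Real.add_one_le_exp u
  have hE' := aux_exp u
  have hEp := Real.exp_pos u
  rcases hu.lt_or_gt with h | h
  · rw [abs_of_neg h, show (Real.exp u - 1) / u = (1 - Real.exp u) / (-u) by
      rw [← neg_div_neg_eq]; ring_nf]
    rw [mul_div_assoc', div_le_div_iff₀ (by linarith) (by nlinarith)]
    nlinarith
  · rw [abs_of_pos h, mul_div_assoc', div_le_div_iff₀ h (by nlinarith)]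
    nlinarith

lemma integral_ne' (a T : ℝ) (hT : 1 ≤ T) (ha : a ≠ 1) :
    ∫ x in Set.Icc (1 : ℝ) T, x ^ (-a) = (T ^ (1 - a) - 1) / (1 - a) := by
  rw [MeasureTheory.integral_Icc_eq_integral_Ioc, ← integral_of_le hT,
    integral_rpow (Or.inr ⟨fun h => ha (by linarith [neg_injective h]),
      by rw [Set.uIcc_of_le hT]; intro h; linarith [h.1]⟩)]
  rw [Real.one_rpow]
  ring_nf

lemma integral_one' (T : ℝ) (hT : 1 ≤ T) :
    ∫ x in Set.Icc (1 : ℝ) T, x ^ (-(1:ℝ)) = Real.log T := by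
  rw [MeasureTheory.integral_Icc_eq_integral_Ioc, ← integral_of_le hT]
  simp_rw [Real.rpow_neg_one]
  rw [integral_inv_of_pos one_pos (by linarith : (0:ℝ) < T)]
  simp

/-- There exist universal constants `C ≥ c > 0` such that for all `(a, T) ∈ ℝ × [1,∞)`:
`c (1+T^{1-a})/(1+|1-a| ln T) · ln T ≤ ∫_1^T x^{-a} dx ≤ C (1+T^{1-a})/(1+|1-a| ln T) · ln T`. -/
theorem basic_power_integral_bounds :
    ∃ C c : ℝ, 0 < c ∧ c ≤ C ∧
      ∀ a T : ℝ, 1 ≤ T →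
        c * ((1 + T ^ (1 - a)) / (1 + |1 - a| * Real.log T)) * Real.log T ≤
            (∫ x in Set.Icc (1 : ℝ) T, x ^ (-a)) ∧
          (∫ x in Set.Icc (1 : ℝ) T, x ^ (-a)) ≤
            C * ((1 + T ^ (1 - a)) / (1 + |1 - a| * Real.log T)) * Real.log T := by
  refine ⟨2, 1/2, by norm_num, by norm_num, fun a T hT => ?_⟩
  rcases eq_or_lt_of_le hT with hT1 | hT1
  · -- T = 1
    rw [← hT1]
    simp [Set.Icc_self, Real.log_one]
  have hTpos : (0:ℝ) < T := by linarith
  have hL : 0 < Real.log T := Real.log_pos hT1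
  set L := Real.log T with hLdef
  by_cases ha : a = 1
  · subst ha
    rw [integral_one' T hT]
    norm_num [Real.rpow_zero]
    constructor <;> linarith
  · have hb : 1 - a ≠ 0 := sub_ne_zero.mpr (fun h => ha h.symm)
    have hu : (1 - a) * L ≠ 0 := mul_ne_zero hb hL.ne'
    set u := (1 - a) * L with hudef
    have hTb : T ^ (1 - a) = Real.exp u := by
      rw [Real.rpow_def_of_pos hTpos, hudef, mul_comm]
    have habs : |1 - a| * L = |u| := by
      rw [hudef, abs_mul, abs_of_pos hL]
    rw [integral_ne' a T hT ha, hTb, habs]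
    have hdiv : (Real.exp u - 1) / (1 - a) = (Real.exp u - 1) / u * L := by
      rw [hudef]
      field_simp
    rw [hdiv]
    constructor
    · calc 1/2 * ((1 + Real.exp u) / (1 + |u|)) * L
          = (1 + Real.exp u) / (1 + |u|) / 2 * L := by ring
        _ ≤ (Real.exp u - 1) / u * L :=
          mul_le_mul_of_nonneg_right (key_low u hu) hL.le
    · calc (Real.exp u - 1) / u * L
          ≤ 2 * ((1 + Real.exp u) / (1 + |u|)) * L :=
          mul_le_mul_of_nonneg_right (key_high u hu) hL.le
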